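/- Let d ≥ 1, let θ₀,...,θ_d be pairwise distinct real numbers, let m₀,...,m_d be positive reals, let C > 0, and let P₀,...,P_d be real numbers with mᵢ · Pᵢ · ∏_{j≠i}(θᵢ - θⱼ) = C for all i. Let H ⊆ {0,...,d} with |H| ≥ 2. Then all P_h for h ∈ H are equal if and only if ∑ᵢ mᵢ θᵢᵉ ∏_{j∉H}(θᵢ - θⱼ) = 0 for all 0 ≤ e ≤ |H| - 2. -/

import Mathlib

open Finset Polynomial

theorem key_moment {ι : Type*} [DecidableEq ι] (s : Finset ι) (v : ι → ℝ)
    (hv : Set.InjOn v s) (e : ℕ) (he : e + 2 ≤ s.card) :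
    ∑ i ∈ s, v i ^ e * (∏ j ∈ s.erase i, (v i - v j))⁻¹ = 0 := by
  have hdeg : (Polynomial.X ^ e : ℝ[X]).degree < s.card := by
    rw [degree_X_pow]
    exact_mod_cast Nat.lt_of_lt_of_le (Nat.lt_of_lt_of_le (Nat.lt_succ_self e) (by omega)) le_rfl
  have hI := Lagrange.eq_interpolate (v := v) hv hdeg
  have hco := congrArg (fun p => Polynomial.coeff p (s.card - 1)) hI
  simp only [Lagrange.interpolate_apply] at hco
  rw [finset_sum_coeff] at hco
  have hL : (Polynomial.X ^ e : ℝ[X]).coeff (s.card - 1) = 0 := by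
    rw [coeff_X_pow, if_neg (by omega)]
  have hb : ∀ i ∈ s, (Polynomial.C ((Polynomial.X ^ e : ℝ[X]).eval (v i)) *
      Lagrange.basis s v i).coeff (s.card - 1)
      = v i ^ e * (∏ j ∈ s.erase i, (v i - v j))⁻¹ := by
    intro i hi
    rw [coeff_C_mul, eval_pow, eval_X]
    congr 1
    have hcard : s.card - 1 = (s.erase i).card * 1 := by
      rw [card_erase_of_mem hi, mul_one]
    rw [Lagrange.basis, hcard, coeff_prod_of_natDegree_le]
    · rw [← prod_inv_distrib]
      refine prod_congr rfl fun j hj => ?_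
      have hij : v i ≠ v j := by
        intro hvij
        exact (mem_erase.mp hj).1 (hv (mem_erase.mp hj).2 hi hvij.symm)
      simp [Lagrange.basisDivisor, coeff_sub, coeff_C, coeff_X_one]
    · intro j hj
      have hij : v i ≠ v j := by
        intro hvij
        exact (mem_erase.mp hj).1 (hv (mem_erase.mp hj).2 hi hvij.symm)
      rw [Lagrange.natDegree_basisDivisor_of_ne hij]
  rw [hL, sum_congr rfl hb] at hco
  exact hco.symm

theorem moment_poly {ι : Type*} (s : Finset ι) (v a : ι → ℝ) (N : ℕ)
    (hmom : ∀ e : ℕ, e ≤ N → ∑ i ∈ s, a i * v i ^ e = 0)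
    (R : ℝ[X]) (hR : R.natDegree ≤ N) :
    ∑ i ∈ s, a i * R.eval (v i) = 0 := by
  have hev : ∀ x, R.eval x = ∑ e ∈ range (N + 1), R.coeff e * x ^ e := fun x =>
    eval_eq_sum_range' (Nat.lt_succ_of_le hR) x
  calc ∑ i ∈ s, a i * R.eval (v i)
      = ∑ e ∈ range (N + 1), R.coeff e * ∑ i ∈ s, a i * v i ^ e := by
        simp_rw [hev, mul_sum]
        rw [sum_comm]
        exact sum_congr rfl fun i _ => sum_congr rfl fun e _ => by ring
    _ = 0 := by
        refine sum_eq_zero fun e he => ?_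
        rw [hmom e (Nat.lt_succ_iff.mp (mem_range.mp he)), mul_zero]

theorem stmt1 (d : ℕ) (hd : 1 ≤ d) (θ m P : Fin (d + 1) → ℝ)
    (hθ : Function.Injective θ) (hm : ∀ i, 0 < m i) (C : ℝ) (hC : 0 < C)
    (hP : ∀ i, m i * P i * ∏ j ∈ univ.erase i, (θ i - θ j) = C)
    (H : Finset (Fin (d + 1))) (hH : 2 ≤ H.card) :
    (∀ g ∈ H, ∀ h ∈ H, P g = P h) ↔
      ∀ e : ℕ, e ≤ H.card - 2 →
        ∑ i, m i * θ i ^ e * ∏ j ∈ univ \ H, (θ i - θ j) = 0 := by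
  have hθne : ∀ {i j : Fin (d + 1)}, i ≠ j → θ i - θ j ≠ 0 := by
    intro i j hij h0
    exact hij (hθ (by linarith [sub_eq_zero.mp h0]))
  have hPne : ∀ i, P i ≠ 0 := by
    intro i hPi
    have h1 := hP i
    rw [hPi, mul_zero, zero_mul] at h1
    exact hC.ne' h1.symm
  -- split of the full product for i ∈ H
  have hsplit : ∀ i ∈ H, ∏ j ∈ univ.erase i, (θ i - θ j)
      = (∏ j ∈ H.erase i, (θ i - θ j)) * ∏ j ∈ univ \ H, (θ i - θ j) := by
    intro i hi
    rw [← prod_union]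
    · congr 1
      ext x
      simp only [mem_union, mem_erase, mem_sdiff, mem_univ, true_and]
      constructor
      · rintro ⟨hx, -⟩
        by_cases hxH : x ∈ H
        · exact Or.inl ⟨hx, hxH⟩
        · exact Or.inr hxH
      · rintro (⟨hx, -⟩ | hx)
        · exact ⟨hx, trivial⟩
        · exact ⟨fun h => hx (h ▸ hi), trivial⟩
    · exact disjoint_left.mpr fun x hx hx' => (mem_sdiff.mp hx').2 (mem_erase.mp hx).2
  have hwHne : ∀ i, (∏ j ∈ H.erase i, (θ i - θ j)) ≠ 0 := fun i =>
    prod_ne_zero_iff.mpr fun j hj => hθne (Ne.symm (mem_erase.mp hj).1)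
  have hout : ∀ i, i ∉ H → (∏ j ∈ univ \ H, (θ i - θ j)) = 0 := fun i hi =>
    prod_eq_zero (mem_sdiff.mpr ⟨mem_univ i, hi⟩) (sub_self (θ i))
  constructor
  · -- forward
    intro hPeq e he
    obtain ⟨g0, hg0⟩ := card_pos.mp (by omega : 0 < H.card)
    have hsum : ∑ i, m i * θ i ^ e * ∏ j ∈ univ \ H, (θ i - θ j)
        = ∑ i ∈ H, m i * θ i ^ e * ∏ j ∈ univ \ H, (θ i - θ j) := by
      refine (sum_subset (subset_univ H) fun i _ hi => ?_).symm
      rw [hout i hi, mul_zero]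
    rw [hsum]
    have hterm : ∀ i ∈ H, m i * θ i ^ e * ∏ j ∈ univ \ H, (θ i - θ j)
        = (C / P g0) * (θ i ^ e * (∏ j ∈ H.erase i, (θ i - θ j))⁻¹) := by
      intro i hi
      have h1 := hP i
      rw [hsplit i hi, hPeq i hi g0 hg0] at h1
      have hp := hPne g0
      have hw := hwHne i
      field_simp
      linear_combination θ i ^ e * h1
    rw [sum_congr rfl hterm, ← mul_sum,
      key_moment H θ hθ.injOn e (by omega), mul_zero]
  · -- backward
    intro hsum g hg h hh
    by_cases hgh : g = h
    · rw [hgh]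
    have hgh' : g ≠ h := hgh
    have hhg : h ∈ H.erase g := mem_erase.mpr ⟨Ne.symm hgh', hh⟩
    have hgh2 : g ∈ H.erase h := mem_erase.mpr ⟨hgh', hg⟩
    set T : Finset (Fin (d + 1)) := (H.erase g).erase h with hT
    have hhT : h ∉ T := notMem_erase h _
    have hgT : g ∉ T := fun hgT' => notMem_erase g H (mem_of_mem_erase hgT')
    have hcardT : T.card = H.card - 2 := by
      rw [hT, card_erase_of_mem hhg, card_erase_of_mem hg]
      omega
    set R : Polynomial ℝ := ∏ j ∈ T, (Polynomial.X - Polynomial.C (θ j)) with hR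
    have hRdeg : R.natDegree ≤ H.card - 2 := by
      refine le_trans (Polynomial.natDegree_prod_le _ _) ?_
      simp only [Polynomial.natDegree_X_sub_C]
      rw [sum_const, smul_eq_mul, mul_one, hcardT]
    have hmom : ∀ e : ℕ, e ≤ H.card - 2 →
        ∑ i, (m i * ∏ j ∈ univ \ H, (θ i - θ j)) * θ i ^ e = 0 := by
      intro e he
      rw [← hsum e he]
      exact sum_congr rfl fun i _ => by ring
    have hpoly := moment_poly univ θ (fun i => m i * ∏ j ∈ univ \ H, (θ i - θ j))
      (H.card - 2) hmom R hRdeg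
    have hevalR : ∀ x : ℝ, R.eval x = ∏ j ∈ T, (x - θ j) := by
      intro x
      simp [hR, Polynomial.eval_prod]
    simp only [hevalR] at hpoly
    have hkey : (m g * ∏ j ∈ univ \ H, (θ g - θ j)) * ∏ j ∈ T, (θ g - θ j)
        + (m h * ∏ j ∈ univ \ H, (θ h - θ j)) * ∏ j ∈ T, (θ h - θ j) = 0 := by
      have h2' : ∑ i ∈ ({g, h} : Finset (Fin (d + 1))),
          (m i * ∏ j ∈ univ \ H, (θ i - θ j)) * ∏ j ∈ T, (θ i - θ j) = 0 := by
        rw [← hpoly]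
        refine sum_subset (subset_univ _) fun i _ hi => ?_
        simp only [mem_insert, mem_singleton, not_or] at hi
        by_cases hiH : i ∈ H
        · have hiT : i ∈ T := mem_erase.mpr ⟨hi.2, mem_erase.mpr ⟨hi.1, hiH⟩⟩
          rw [prod_eq_zero hiT (sub_self (θ i)), mul_zero]
        · rw [hout i hiH, mul_zero, zero_mul]
      rwa [sum_pair hgh'] at h2'
    have hwHg : ∏ j ∈ H.erase g, (θ g - θ j) = (θ g - θ h) * ∏ j ∈ T, (θ g - θ j) := by
      rw [← insert_erase hhg, prod_insert hhT]
    have hTh : (H.erase h).erase g = T := by rw [hT, erase_right_comm]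
    have hwHh : ∏ j ∈ H.erase h, (θ h - θ j) = (θ h - θ g) * ∏ j ∈ T, (θ h - θ j) := by
      rw [← insert_erase hgh2, prod_insert (hTh ▸ hgT), hTh]
    have h1 := hP g
    rw [hsplit g hg, hwHg] at h1
    have h2 := hP h
    rw [hsplit h hh, hwHh] at h2
    set A : ℝ := (m g * ∏ j ∈ univ \ H, (θ g - θ j)) * ∏ j ∈ T, (θ g - θ j) with hA
    have hAPg : A * ((θ g - θ h) * P g) = C := by rw [hA]; linear_combination h1
    have hAPh : A * ((θ g - θ h) * P h) = C := by
      rw [hA]; linear_combination h2 + (θ g - θ h) * P h * hkey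
    have hAne : A ≠ 0 := by
      intro h0
      rw [h0, zero_mul] at hAPg
      exact hC.ne' hAPg.symm
    have := mul_left_cancel₀ hAne (hAPg.trans hAPh.symm)
    exact mul_left_cancel₀ (hθne hgh') this
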